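/- Define index sequences (a_k) and (b_k) by a_1 = 1, b_1 = 2, and a_{2i} = 2i+1, a_{2i+1} = 2i, b_{2i} = 2i-1, b_{2i+1} = 2i+2 for i ≥ 1. Then: (1) for every integer ℓ with 1 ≤ ℓ ≤ (n-2)/2, the leading monomial of the (2ℓ+1)-minor [a_1,…,a_{2ℓ+1} | b_1,…,b_{2ℓ+1}] with respect to ≺ equals x_{12} · x_{13} · x_{24} ⋯ x_{2ℓ,2ℓ+2} = x_{12} · ∏_{k=1}^{2ℓ} x_{k,k+2}; and (2) for every integer ℓ with 1 ≤ ℓ ≤ (n-3)/2, the leading monomial of the (2ℓ)-minor [a_1,…,a_{2ℓ} | b_1,…,b_{2ℓ}] with respect to ≺ equals x_{12} · x_{13} · x_{24} ⋯ x_{2ℓ-1,2ℓ+1} = x_{12} · ∏_{k=1}^{2ℓ-1} x_{k,k+2}. -/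

import Mathlib

open MvPolynomial

/-- The set `D` of diagonal variables `x_{ii}` (0-indexed). -/
def Dset (n : ℕ) : Set (Sym2 (Fin n)) := {v | ∃ i : Fin n, v = s(i, i)}

/-- The set `U` of variables `x_{13}, x_{24}, …, x_{n-2,n}, x_{12}, x_{n-1,n}` (0-indexed). -/
def Uset (n : ℕ) : Set (Sym2 (Fin n)) :=
  {v | ∃ i j : Fin n, v = s(i, j) ∧
    ((j : ℕ) = (i : ℕ) + 2 ∨ ((i : ℕ) = 0 ∧ (j : ℕ) = 1) ∨
      ((i : ℕ) = n - 2 ∧ (j : ℕ) = n - 1))}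

/-- `rank` encodes the linear order on the variables described in the paper:
`x_{11} ≻ … ≻ x_{nn} ≻ x_{13} ≻ … ≻ x_{n-2,n} ≻ x_{12} ≻ x_{n-1,n} ≻ (rest)`,
where a smaller rank means a larger variable. -/
def IsGoodRank (n : ℕ) (rank : Sym2 (Fin n) → ℕ) : Prop :=
  Function.Injective rank ∧
  (∀ i : Fin n, rank s(i, i) = (i : ℕ)) ∧
  (∀ i j : Fin n, (j : ℕ) = (i : ℕ) + 2 → rank s(i, j) = n + (i : ℕ)) ∧
  (∀ i j : Fin n, (i : ℕ) = 0 → (j : ℕ) = 1 → rank s(i, j) = 2 * n - 2) ∧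
  (∀ i j : Fin n, (i : ℕ) = n - 2 → (j : ℕ) = n - 1 → rank s(i, j) = 2 * n - 1) ∧
  (∀ v : Sym2 (Fin n), v ∉ Dset n ∪ Uset n → 2 * n ≤ rank v)

/-- The degree reverse lexicographic order on exponent vectors induced by `rank`:
`a ≺ b` iff `deg a < deg b`, or the degrees agree and at the `rank`-largest (i.e. smallest)
variable where `a` and `b` differ, `a` has the larger exponent. -/
def DegRevLexLT {n : ℕ} (rank : Sym2 (Fin n) → ℕ) (a b : Sym2 (Fin n) →₀ ℕ) : Prop :=
  (a.sum fun _ e => e) < (b.sum fun _ e => e) ∨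
    ((a.sum fun _ e => e) = (b.sum fun _ e => e) ∧
      ∃ v : Sym2 (Fin n), b v < a v ∧ ∀ w : Sym2 (Fin n), rank v < rank w → a w = b w)

/-- `μ` is the leading monomial (exponent vector) of `f` w.r.t. the degrevlex order `≺`. -/
def IsLeadingMonomial {K : Type*} [Field K] {n : ℕ} (rank : Sym2 (Fin n) → ℕ)
    (f : MvPolynomial (Sym2 (Fin n)) K) (μ : Sym2 (Fin n) →₀ ℕ) : Prop :=
  μ ∈ f.support ∧ ∀ ν ∈ f.support, ν ≠ μ → DegRevLexLT rank ν μ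

/-- The minor `[a_1,…,a_s | b_1,…,b_s]` of the generic symmetric matrix `X = (x_{ij})`. -/
noncomputable def symMinor (K : Type*) [Field K] {n s : ℕ} (a b : Fin s → Fin n) :
    MvPolynomial (Sym2 (Fin n)) K :=
  Matrix.det (Matrix.of fun k l => (MvPolynomial.X s(a k, b l) : MvPolynomial (Sym2 (Fin n)) K))

theorem Equiv.Perm.apply_inv_self {α : Type*} (f : Equiv.Perm α) (x : α) : f (f⁻¹ x) = x :=
  Equiv.apply_symm_apply f x

namespace SymAux

def good (p q : ℕ) : Prop :=
  p = q ∨ q = p + 2 ∨ p = q + 2 ∨ (p = 0 ∧ q = 1) ∨ (p = 1 ∧ q = 0)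

def Af (m : ℕ) : ℕ := if m = 0 then 0 else if m % 2 = 1 then m + 1 else m - 1
def Bf (m : ℕ) : ℕ := if m % 2 = 1 then m - 1 else m + 1

lemma good_odd {p q : ℕ} (h : good (Af p) (Bf q)) (hp : p % 2 = 1) :
    q % 2 = 1 ∧ p ≤ q := by
  unfold good Af Bf at h
  rcases h with h|h|h|⟨h1,h2⟩|⟨h1,h2⟩ <;> split_ifs at * <;> omega

lemma good_even {p q : ℕ} (h : good (Af p) (Bf q)) (hp : p % 2 = 0) (hq : q % 2 = 0) :
    q ≤ p := by
  unfold good Af Bf at h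
  rcases h with h|h|h|⟨h1,h2⟩|⟨h1,h2⟩ <;> split_ifs at * <;> omega

lemma fix_of_le {s : ℕ} (σ : Equiv.Perm (Fin s)) (T : Finset (Fin s))
    (hmap : ∀ k ∈ T, σ k ∈ T) (hle : ∀ k ∈ T, k.val ≤ (σ k).val) :
    ∀ k ∈ T, σ k = k := by
  have himg : T.image σ = T := by
    apply Finset.eq_of_subset_of_card_le
    · intro j hj
      obtain ⟨k, hk, rfl⟩ := Finset.mem_image.mp hj
      exact hmap k hk
    · rw [Finset.card_image_of_injective _ σ.injective]
  have hsum : ∑ k ∈ T, k.val = ∑ k ∈ T, (σ k).val := by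
    conv_lhs => rw [← himg]
    rw [Finset.sum_image (by intro x _ y _ hxy; exact σ.injective hxy)]
  intro k hk
  exact Fin.ext (((Finset.sum_eq_sum_iff_of_le hle).mp hsum k hk).symm)

lemma key {s : ℕ} (σ : Equiv.Perm (Fin s))
    (h : ∀ k : Fin s, good (Af k.val) (Bf ((σ k)).val)) : σ = 1 := by
  classical
  set O : Finset (Fin s) := Finset.univ.filter (fun k => k.val % 2 = 1) with hO
  have hmemO : ∀ k : Fin s, k ∈ O ↔ k.val % 2 = 1 := by
    intro k; simp [hO]
  have hOdd : ∀ k ∈ O, σ k ∈ O ∧ k.val ≤ (σ k).val := by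
    intro k hk
    have := good_odd (h k) ((hmemO k).mp hk)
    exact ⟨(hmemO (σ k)).mpr this.1, this.2⟩
  have hfixO : ∀ k ∈ O, σ k = k :=
    fix_of_le σ O (fun k hk => (hOdd k hk).1) (fun k hk => (hOdd k hk).2)
  have hmapE : ∀ k ∈ Oᶜ, σ⁻¹ k ∈ Oᶜ := by
    intro k hk
    rw [Finset.mem_compl] at hk ⊢
    intro hmem
    have := hfixO _ hmem
    rw [Equiv.Perm.apply_inv_self] at this
    exact hk (this ▸ hmem)
  have hleE : ∀ k ∈ Oᶜ, k.val ≤ (σ⁻¹ k).val := by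
    intro k hk
    have hk' := hmapE k hk
    rw [Finset.mem_compl, hmemO] at hk hk'
    have hg := good_even (h (σ⁻¹ k)) (by omega)
      (by rw [Equiv.Perm.apply_inv_self]; omega)
    rw [Equiv.Perm.apply_inv_self] at hg
    exact hg
  have hfixE := fix_of_le σ⁻¹ Oᶜ hmapE hleE
  ext k
  by_cases hk : k ∈ O
  · rw [hfixO k hk]; rfl
  · have := hfixE k (Finset.mem_compl.mpr hk)
    have := congrArg σ this
    rw [Equiv.Perm.apply_inv_self] at this
    simp only [Equiv.Perm.one_apply]
    exact congrArg Fin.val this.symm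

lemma prodX {K : Type*} [Field K] {τ : Type*} {ι : Type*} (t : Finset ι) (w : ι → τ) :
    (∏ i ∈ t, (X (w i) : MvPolynomial τ K)) =
      monomial (∑ i ∈ t, Finsupp.single (w i) 1) 1 := by
  classical
  induction t using Finset.induction_on with
  | empty => simp [monomial_zero']
  | insert _ _ hni ih =>
      rw [Finset.prod_insert hni, Finset.sum_insert hni, ih, X, monomial_mul, one_mul]

lemma degSum {τ : Type*} {ι : Type*} (t : Finset ι) (w : ι → τ) :
    ((∑ i ∈ t, Finsupp.single (w i) (1 : ℕ)).sum fun _ e => e) = t.card := by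
  classical
  induction t using Finset.induction_on with
  | empty => simp
  | insert _ _ hni ih =>
      rw [Finset.sum_insert hni,
        Finsupp.sum_add_index' (fun _ => rfl) (fun _ _ _ => rfl),
        Finsupp.sum_single_index rfl, ih, Finset.card_insert_of_notMem hni]
      omega

lemma mu_eq {n s N : ℕ} (hsN : s = N + 1) (hn : s + 1 ≤ n)
    (a b : Fin s → Fin n)
    (hab : ∀ k : Fin s, (a k : ℕ) = Af k.val ∧ (b k : ℕ) = Bf k.val) :
    (∑ k : Fin s, Finsupp.single s(a k, b k) (1 : ℕ)) =
      Finsupp.single s((⟨0, by omega⟩ : Fin n), (⟨1, by omega⟩ : Fin n)) 1 +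
        ∑ k : Fin N, Finsupp.single
          s((⟨(k : ℕ), by have := k.isLt; omega⟩ : Fin n),
            (⟨(k : ℕ) + 2, by have := k.isLt; omega⟩ : Fin n)) 1 := by
  subst hsN
  rw [Fin.sum_univ_succ]
  congr 1
  · obtain ⟨h1, h2⟩ := hab 0
    rw [Fin.val_zero] at h1 h2
    unfold Af at h1
    unfold Bf at h2
    rw [if_pos rfl] at h1
    rw [if_neg (by omega)] at h2
    congr 1
    rw [Sym2.eq_iff]
    exact Or.inl ⟨Fin.ext (show (a 0 : ℕ) = 0 by omega),
      Fin.ext (show (b 0 : ℕ) = 1 by omega)⟩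
  · refine Finset.sum_congr rfl fun k _ => ?_
    obtain ⟨h1, h2⟩ := hab k.succ
    rw [Fin.val_succ] at h1 h2
    unfold Af at h1
    unfold Bf at h2
    congr 1
    rw [Sym2.eq_iff]
    rcases Nat.even_or_odd k.val with ⟨r, hr⟩ | ⟨r, hr⟩
    · rw [if_neg (by omega), if_pos (by omega)] at h1
      rw [if_pos (by omega)] at h2
      exact Or.inr ⟨Fin.ext (show (a k.succ : ℕ) = (k : ℕ) + 2 by omega),
        Fin.ext (show (b k.succ : ℕ) = (k : ℕ) by omega)⟩
    · rw [if_neg (by omega), if_neg (by omega)] at h1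
      rw [if_neg (by omega)] at h2
      exact Or.inl ⟨Fin.ext (show (a k.succ : ℕ) = (k : ℕ) by omega),
        Fin.ext (show (b k.succ : ℕ) = (k : ℕ) + 2 by omega)⟩

lemma main {K : Type*} [Field K] {n s : ℕ} (hn : s + 1 ≤ n)
    (rank : Sym2 (Fin n) → ℕ) (hrank : IsGoodRank n rank)
    (a b : Fin s → Fin n)
    (hab : ∀ k : Fin s, (a k : ℕ) = Af k.val ∧ (b k : ℕ) = Bf k.val) :
    IsLeadingMonomial rank (symMinor K a b)
      (∑ k : Fin s, Finsupp.single s(a k, b k) 1) := by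
  classical
  obtain ⟨hinj, hdiag, hoff, h01, hlast, hrest⟩ := hrank
  have hn1 : 1 ≤ n := by omega
  set μ : Sym2 (Fin n) →₀ ℕ := ∑ k : Fin s, Finsupp.single s(a k, b k) 1 with hμ
  set mono : Equiv.Perm (Fin s) → (Sym2 (Fin n) →₀ ℕ) :=
    fun σ => ∑ k : Fin s, Finsupp.single s(a (σ k), b k) 1 with hmono
  have hdet : symMinor K a b =
      ∑ σ : Equiv.Perm (Fin s), monomial (mono σ) (((Equiv.Perm.sign σ : ℤ) : K)) := by
    rw [symMinor, Matrix.det_apply']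
    refine Finset.sum_congr rfl fun σ _ => ?_
    have h1 : (∏ i, (Matrix.of fun k l =>
        (X s(a k, b l) : MvPolynomial (Sym2 (Fin n)) K)) (σ i) i)
        = monomial (mono σ) 1 := by
      simp only [Matrix.of_apply]
      exact prodX Finset.univ fun i => s(a (σ i), b i)
    rw [h1, ← map_intCast (C : K →+* MvPolynomial (Sym2 (Fin n)) K), C_mul_monomial, mul_one]
  have hcoeff : ∀ ν, coeff ν (symMinor K a b) =
      ∑ σ : Equiv.Perm (Fin s), if mono σ = ν then ((Equiv.Perm.sign σ : ℤ) : K) else 0 := by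
    intro ν
    rw [hdet, coeff_sum]
    exact Finset.sum_congr rfl fun σ _ => coeff_monomial ν (mono σ) _
  have hmono1 : mono 1 = μ := by
    rw [hmono, hμ]
    simp
  -- variables of μ have rank ≤ 2n-2
  have hμrank : ∀ v, μ v ≠ 0 → rank v ≤ 2 * n - 2 := by
    intro v hv
    rw [hμ, Finsupp.finset_sum_apply] at hv
    obtain ⟨k, -, hk⟩ := Finset.exists_ne_zero_of_sum_ne_zero hv
    have hveq : v = s(a k, b k) := by
      by_contra hne
      exact hk (Finsupp.single_eq_of_ne' fun hc => hne hc.symm)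
    obtain ⟨ha, hb⟩ := hab k
    rcases Nat.eq_zero_or_pos k.val with h0 | hpos
    · rw [h0] at ha hb
      simp only [Af, Bf, if_pos rfl] at ha hb
      have := h01 (a k) (b k) ha (by simpa using hb)
      rw [hveq, this]
    · have hks : k.val ≤ s - 1 := by have := k.isLt; omega
      rcases Nat.even_or_odd k.val with ⟨r, hr⟩ | ⟨r, hr⟩
      · -- k.val even and positive: a = k-1, b = k+1
        have ha' : (a k : ℕ) = k.val - 1 := by
          rw [ha]; unfold Af; rw [if_neg (by omega), if_neg (by omega)]
        have hb' : (b k : ℕ) = k.val + 1 := by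
          rw [hb]; unfold Bf; rw [if_neg (by omega)]
        have := hoff (a k) (b k) (by omega)
        rw [hveq, this]
        omega
      · -- k.val odd: a = k+1, b = k-1
        have ha' : (a k : ℕ) = k.val + 1 := by
          rw [ha]; unfold Af; rw [if_neg (by omega), if_pos (by omega)]
        have hb' : (b k : ℕ) = k.val - 1 := by
          rw [hb]; unfold Bf; rw [if_pos (by omega)]
        have hswap : s(a k, b k) = s(b k, a k) := Sym2.eq_swap
        have := hoff (b k) (a k) (by omega)
        rw [hveq, hswap, this]
        omega
  -- small rank implies good
  have hgood : ∀ p q : Fin n, rank s(p, q) ≤ 2 * n - 2 → good p.val q.val := by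
    intro p q hr
    by_cases hmem : s(p, q) ∈ Dset n ∪ Uset n
    · rcases hmem with hd | hu
      · obtain ⟨i, hi⟩ := hd
        rw [Sym2.eq_iff] at hi
        left
        rcases hi with ⟨rfl, rfl⟩ | ⟨rfl, rfl⟩ <;> rfl
      · obtain ⟨i, j, hv, hcond⟩ := hu
        rcases hcond with hc | hc | hc
        · rw [Sym2.eq_iff] at hv
          rcases hv with ⟨rfl, rfl⟩ | ⟨rfl, rfl⟩
          · exact Or.inr (Or.inl hc)
          · exact Or.inr (Or.inr (Or.inl hc))
        · rw [Sym2.eq_iff] at hv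
          rcases hv with ⟨rfl, rfl⟩ | ⟨rfl, rfl⟩
          · exact Or.inr (Or.inr (Or.inr (Or.inl hc)))
          · exact Or.inr (Or.inr (Or.inr (Or.inr ⟨hc.2, hc.1⟩)))
        · exfalso
          have := hlast i j hc.1 hc.2
          rw [hv, this] at hr
          omega
    · have := hrest _ hmem
      omega
  -- non-identity permutations have a high-rank variable
  have hbig : ∀ σ : Equiv.Perm (Fin s), σ ≠ 1 →
      ∃ v, 2 * n - 1 ≤ rank v ∧ 1 ≤ mono σ v ∧ μ v = 0 := by
    intro σ hσ
    have hnall : ¬ ∀ k : Fin s, rank s(a (σ k), b k) ≤ 2 * n - 2 := by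
      intro hall
      apply hσ
      have hkey : σ⁻¹ = 1 := by
        apply key
        intro k
        have h2 := hall (σ⁻¹ k)
        rw [Equiv.Perm.apply_inv_self] at h2
        have h1 := hgood _ _ h2
        rw [(hab k).1, (hab (σ⁻¹ k)).2] at h1
        exact h1
      rw [← inv_inv σ, hkey, inv_one]
    push_neg at hnall
    obtain ⟨k, hk⟩ := hnall
    refine ⟨s(a (σ k), b k), by omega, ?_, ?_⟩
    · rw [hmono]
      simp only [Finsupp.finset_sum_apply]
      have h1 : (Finsupp.single s(a (σ k), b k) (1 : ℕ)) s(a (σ k), b k) = 1 :=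
        Finsupp.single_eq_same
      calc (1 : ℕ) = (Finsupp.single s(a (σ k), b k) (1 : ℕ)) s(a (σ k), b k) := h1.symm
        _ ≤ _ := Finset.single_le_sum
          (f := fun k' : Fin s => (Finsupp.single s(a (σ k'), b k') (1 : ℕ)) s(a (σ k), b k))
          (fun i _ => Nat.zero_le _) (Finset.mem_univ k)
    · by_contra h0
      have := hμrank _ h0
      omega
  constructor
  · rw [mem_support_iff, hcoeff]
    rw [Finset.sum_eq_single (1 : Equiv.Perm (Fin s))]
    · rw [if_pos hmono1]
      simp
    · intro σ _ hσ
      rw [if_neg]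
      obtain ⟨v, _, hv1, hv0⟩ := hbig σ hσ
      intro heq
      rw [heq] at hv1
      omega
    · intro h
      exact absurd (Finset.mem_univ 1) h
  · intro ν hν hne
    rw [mem_support_iff, hcoeff] at hν
    obtain ⟨σ, -, hσ⟩ := Finset.exists_ne_zero_of_sum_ne_zero hν
    have hmσ : mono σ = ν := by
      by_contra h
      rw [if_neg h] at hσ
      exact hσ rfl
    have hσ1 : σ ≠ 1 := fun h => hne (by rw [← hmσ, h, hmono1])
    obtain ⟨v₀, hv₀r, hv₀ν, hv₀μ⟩ := hbig σ hσ1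
    rw [hmσ] at hv₀ν
    right
    refine ⟨?_, ?_⟩
    · rw [← hmσ, hmono, hμ, degSum, degSum]
    · set Dif := (ν.support ∪ μ.support).filter (fun w => ν w ≠ μ w) with hD
      have hv₀D : v₀ ∈ Dif := by
        rw [hD, Finset.mem_filter, Finset.mem_union]
        exact ⟨Or.inl (Finsupp.mem_support_iff.mpr (by omega)), by omega⟩
      obtain ⟨v, hvD, hvmax⟩ := Finset.exists_max_image Dif rank ⟨v₀, hv₀D⟩
      have hvr : 2 * n - 1 ≤ rank v := le_trans hv₀r (hvmax v₀ hv₀D)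
      have hμv : μ v = 0 := by
        by_contra h
        have := hμrank v h
        omega
      have hvne : ν v ≠ μ v := (Finset.mem_filter.mp hvD).2
      refine ⟨v, by omega, ?_⟩
      intro w hw
      by_contra hwne
      have hwD : w ∈ Dif := by
        rw [hD, Finset.mem_filter, Finset.mem_union]
        refine ⟨?_, hwne⟩
        rcases Nat.eq_zero_or_pos (ν w) with h1 | h1
        · exact Or.inr (Finsupp.mem_support_iff.mpr (by omega))
        · exact Or.inl (Finsupp.mem_support_iff.mpr (by omega))
      exact absurd (hvmax w hwD) (by omega)

end SymAux

/-- **Lemma 3.4.** (All indices and matrix entries are 0-based, so the paper's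
`a_1 = 1, b_1 = 2, a_{2i} = 2i+1, a_{2i+1} = 2i, b_{2i} = 2i-1, b_{2i+1} = 2i+2`
become: position `0` carries values `(0,1)`; position `2i-1` carries
`(2i, 2i-2)`; position `2i` carries `(2i-1, 2i+1)`.  The bounds
`ℓ ≤ (n-2)/2` and `ℓ ≤ (n-3)/2` become `2ℓ+2 ≤ n` and `2ℓ+3 ≤ n`.)
Part (1): `in_≺ [a_1,…,a_{2ℓ+1} | b_1,…,b_{2ℓ+1}] = x_{12}·∏_{k=1}^{2ℓ} x_{k,k+2}`;
Part (2): `in_≺ [a_1,…,a_{2ℓ} | b_1,…,b_{2ℓ}] = x_{12}·∏_{k=1}^{2ℓ-1} x_{k,k+2}`. -/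


theorem stmt3 {K : Type*} [Field K] (n : ℕ)
    (rank : Sym2 (Fin n) → ℕ) (hrank : IsGoodRank n rank) :
    (∀ ℓ : ℕ, ∀ hℓ1 : 1 ≤ ℓ, ∀ hℓ2 : 2 * ℓ + 2 ≤ n,
      ∀ a b : Fin (2 * ℓ + 1) → Fin n,
        (∀ k : Fin (2 * ℓ + 1), (k : ℕ) = 0 → ((a k : ℕ) = 0 ∧ (b k : ℕ) = 1)) →
        (∀ k : Fin (2 * ℓ + 1), ∀ i : ℕ, 1 ≤ i → i ≤ ℓ → (k : ℕ) = 2 * i - 1 →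
          ((a k : ℕ) = 2 * i ∧ (b k : ℕ) = 2 * i - 2)) →
        (∀ k : Fin (2 * ℓ + 1), ∀ i : ℕ, 1 ≤ i → i ≤ ℓ → (k : ℕ) = 2 * i →
          ((a k : ℕ) = 2 * i - 1 ∧ (b k : ℕ) = 2 * i + 1)) →
        IsLeadingMonomial rank (symMinor K a b)
          (Finsupp.single s((⟨0, by omega⟩ : Fin n), (⟨1, by omega⟩ : Fin n)) 1 +
            ∑ k : Fin (2 * ℓ), Finsupp.single
              s((⟨(k : ℕ), by have := k.isLt; omega⟩ : Fin n),
                (⟨(k : ℕ) + 2, by have := k.isLt; omega⟩ : Fin n)) 1))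
    ∧
    (∀ ℓ : ℕ, ∀ hℓ1 : 1 ≤ ℓ, ∀ hℓ2 : 2 * ℓ + 3 ≤ n,
      ∀ a b : Fin (2 * ℓ) → Fin n,
        (∀ k : Fin (2 * ℓ), (k : ℕ) = 0 → ((a k : ℕ) = 0 ∧ (b k : ℕ) = 1)) →
        (∀ k : Fin (2 * ℓ), ∀ i : ℕ, 1 ≤ i → i ≤ ℓ → (k : ℕ) = 2 * i - 1 →
          ((a k : ℕ) = 2 * i ∧ (b k : ℕ) = 2 * i - 2)) →
        (∀ k : Fin (2 * ℓ), ∀ i : ℕ, 1 ≤ i → i ≤ ℓ → (k : ℕ) = 2 * i →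
          ((a k : ℕ) = 2 * i - 1 ∧ (b k : ℕ) = 2 * i + 1)) →
        IsLeadingMonomial rank (symMinor K a b)
          (Finsupp.single s((⟨0, by omega⟩ : Fin n), (⟨1, by omega⟩ : Fin n)) 1 +
            ∑ k : Fin (2 * ℓ - 1), Finsupp.single
              s((⟨(k : ℕ), by have := k.isLt; omega⟩ : Fin n),
                (⟨(k : ℕ) + 2, by have := k.isLt; omega⟩ : Fin n)) 1)) := by
  
  constructor
  · intro ℓ hℓ1 hℓ2 a b h0 hodd heven
    have hab : ∀ k : Fin (2 * ℓ + 1),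
        (a k : ℕ) = SymAux.Af k.val ∧ (b k : ℕ) = SymAux.Bf k.val := by
      intro k
      have hI := k.isLt
      rcases Nat.eq_zero_or_pos k.val with hk0 | hkpos
      · obtain ⟨ha, hb⟩ := h0 k hk0
        refine ⟨?_, ?_⟩ <;> simp only [SymAux.Af, SymAux.Bf] <;> split_ifs <;> omega
      · rcases Nat.even_or_odd k.val with ⟨r, hr⟩ | ⟨r, hr⟩
        · obtain ⟨ha, hb⟩ := heven k r (by omega) (by omega) (by omega)
          refine ⟨?_, ?_⟩ <;> simp only [SymAux.Af, SymAux.Bf] <;> split_ifs <;> omega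
        · obtain ⟨ha, hb⟩ := hodd k (r + 1) (by omega) (by omega) (by omega)
          refine ⟨?_, ?_⟩ <;> simp only [SymAux.Af, SymAux.Bf] <;> split_ifs <;> omega
    have hmain := SymAux.main (K := K) (show 2 * ℓ + 1 + 1 ≤ n by omega) rank hrank a b hab
    rw [SymAux.mu_eq rfl (show 2 * ℓ + 1 + 1 ≤ n by omega) a b hab] at hmain
    exact hmain
  · intro ℓ hℓ1 hℓ2 a b h0 hodd heven
    have hab : ∀ k : Fin (2 * ℓ),
        (a k : ℕ) = SymAux.Af k.val ∧ (b k : ℕ) = SymAux.Bf k.val := by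
      intro k
      have hI := k.isLt
      rcases Nat.eq_zero_or_pos k.val with hk0 | hkpos
      · obtain ⟨ha, hb⟩ := h0 k hk0
        refine ⟨?_, ?_⟩ <;> simp only [SymAux.Af, SymAux.Bf] <;> split_ifs <;> omega
      · rcases Nat.even_or_odd k.val with ⟨r, hr⟩ | ⟨r, hr⟩
        · obtain ⟨ha, hb⟩ := heven k r (by omega) (by omega) (by omega)
          refine ⟨?_, ?_⟩ <;> simp only [SymAux.Af, SymAux.Bf] <;> split_ifs <;> omega
        · obtain ⟨ha, hb⟩ := hodd k (r + 1) (by omega) (by omega) (by omega)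
          refine ⟨?_, ?_⟩ <;> simp only [SymAux.Af, SymAux.Bf] <;> split_ifs <;> omega
    have hmain := SymAux.main (K := K) (show 2 * ℓ + 1 ≤ n by omega) rank hrank a b hab
    rw [SymAux.mu_eq (show 2 * ℓ = (2 * ℓ - 1) + 1 by omega)
      (show 2 * ℓ + 1 ≤ n by omega) a b hab] at hmain
    exact hmain
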